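/- Let L ⊆ A be a bracket-closed subspace, m ∈ ℕ, and let w_1, …, w_m ∈ L be homogeneous elements such that w_i² = 0 whenever p_{w_i w_i}² = 1 (1 ≤ i ≤ m). If p_{w_i w_j}·p_{w_j w_i} ≠ 1 whenever i ≠ j and w_i ≠ w_j, then the product w_1 w_2 ⋯ w_m lies in L + F·1. -/

import Mathlib

/-- An `F`-subspace `L` of a `G`-graded algebra `A` is *bracket-closed* (w.r.t. the
bicharacter `χ`) if it is spanned by its homogeneous elements and is closed under the
braided bracket `[u,v] = vu − p_{vu}·uv` of homogeneous elements, where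
`p_{uv} = χ (deg u) (deg v)`. -/
def IsBracketClosed {F A : Type*} (G : Type*) [Field F] [AddCommGroup G]
    [Ring A] [Algebra F A]
    (𝒜 : G → Submodule F A) (χ : G → G → Fˣ) (L : Submodule F A) : Prop :=
  L = Submodule.span F {a : A | a ∈ L ∧ ∃ g : G, a ∈ 𝒜 g} ∧
    ∀ (g h : G), ∀ u ∈ 𝒜 g, ∀ v ∈ 𝒜 h,
      u ∈ L → v ∈ L → v * u - (χ h g : F) • (u * v) ∈ L

namespace Stmt9

set_option linter.unusedSectionVars false

variable {F : Type*} [Field F] {G : Type*} [AddCommGroup G] [DecidableEq G]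
  {A : Type*} [Ring A] [Algebra F A]

section Core

variable (𝒜 : G → Submodule F A) [GradedAlgebra 𝒜]
  (χ : G → G → Fˣ) (L : Submodule F A)

lemma projL (hLs : L = Submodule.span F {a : A | a ∈ L ∧ ∃ g : G, a ∈ 𝒜 g})
    {x : A} (hx : x ∈ L) (e : G) : (DirectSum.decompose 𝒜 x e : A) ∈ L := by
  rw [hLs] at hx
  induction hx using Submodule.span_induction with
  | mem s hs =>
      obtain ⟨hsL, g, hsg⟩ := hs
      by_cases hge : g = e
      · subst hge
        rwa [DirectSum.decompose_of_mem_same 𝒜 hsg]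
      · rw [DirectSum.decompose_of_mem_ne 𝒜 hsg hge]
        exact L.zero_mem
  | zero => simp only [DirectSum.decompose_zero, DirectSum.zero_apply,
      ZeroMemClass.coe_zero]; exact L.zero_mem
  | add a b _ _ ha hb =>
      rw [DirectSum.decompose_add]
      simpa using L.add_mem ha hb
  | smul c a _ ha =>
      rw [DirectSum.decompose_smul]
      simpa [DirectSum.smul_apply] using L.smul_mem c ha

lemma memM_decomp {y : A} {e : G}
    (hy : y ∈ L ⊔ Submodule.span F {(1 : A)})
    (hLs : L = Submodule.span F {a : A | a ∈ L ∧ ∃ g : G, a ∈ 𝒜 g})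
    (hye : y ∈ 𝒜 e) :
    ∃ (l : A) (c : F), l ∈ L ∧ l ∈ 𝒜 e ∧ y = l + c • (1 : A) := by
  obtain ⟨a, ha, b, hb, rfl⟩ := Submodule.mem_sup.mp hy
  obtain ⟨c, rfl⟩ := Submodule.mem_span_singleton.mp hb
  have hproj : ((DirectSum.decompose 𝒜 (a + c • (1:A)) e : A)) = a + c • 1 :=
    DirectSum.decompose_of_mem_same 𝒜 hye
  have h2 : ((DirectSum.decompose 𝒜 a e : A)) + c • ((DirectSum.decompose 𝒜 (1:A) e : A))
      = a + c • 1 := by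
    rw [← hproj, DirectSum.decompose_add, DirectSum.decompose_smul]
    simp only [DirectSum.add_apply, DirectSum.smul_apply, Submodule.coe_add,
      Submodule.coe_smul, SetLike.val_smul]
  by_cases he : e = 0
  · subst he
    have h1 : ((DirectSum.decompose 𝒜 (1:A) 0 : A)) = 1 :=
      DirectSum.decompose_of_mem_same 𝒜 SetLike.GradedOne.one_mem
    rw [h1] at h2
    exact ⟨_, c, projL 𝒜 L hLs ha 0, SetLike.coe_mem _, h2.symm⟩
  · have h1 : ((DirectSum.decompose 𝒜 (1:A) e : A)) = 0 :=
      DirectSum.decompose_of_mem_ne 𝒜 SetLike.GradedOne.one_mem (Ne.symm he)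
    rw [h1, smul_zero, add_zero] at h2
    exact ⟨_, 0, projL 𝒜 L hLs ha e, SetLike.coe_mem _, by rw [zero_smul, add_zero, h2]⟩

lemma swapM (hL : IsBracketClosed G 𝒜 χ L) {u v : A} {e f : G}
    (hue : u ∈ 𝒜 e) (hvf : v ∈ 𝒜 f)
    (huM : u ∈ L ⊔ Submodule.span F {(1 : A)})
    (hvM : v ∈ L ⊔ Submodule.span F {(1 : A)}) :
    u * v - (χ e f : F) • (v * u) ∈ L ⊔ Submodule.span F {(1 : A)} := by
  obtain ⟨l, c, hlL, hle, rfl⟩ := memM_decomp 𝒜 L huM hL.1 hue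
  obtain ⟨l', c', hl'L, hl'f, rfl⟩ := memM_decomp 𝒜 L hvM hL.1 hvf
  set γ : F := (χ e f : F) with hγ
  have key : (l + c • (1:A)) * (l' + c' • 1) - γ • ((l' + c' • 1) * (l + c • 1))
      = (l * l' - γ • (l' * l)) + (1 - γ) • (c' • l) + (1 - γ) • (c • l')
        + ((1 - γ) * (c * c')) • (1 : A) := by
    simp only [mul_add, add_mul, smul_add, mul_smul_comm, smul_mul_assoc, smul_smul,
      mul_one, one_mul, sub_smul, one_smul]
    module
  rw [key]
  have hbr : l * l' - γ • (l' * l) ∈ L := hL.2 f e l' hl'f l hle hl'L hlL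
  have h1M : (1 : A) ∈ L ⊔ Submodule.span F {(1 : A)} :=
    Submodule.mem_sup_right (Submodule.mem_span_singleton_self 1)
  have hLM : ∀ x ∈ L, x ∈ L ⊔ Submodule.span F {(1 : A)} :=
    fun x hx => Submodule.mem_sup_left hx
  exact Submodule.add_mem _
    (Submodule.add_mem _
      (Submodule.add_mem _ (hLM _ hbr)
        (Submodule.smul_mem _ _ (Submodule.smul_mem _ _ (hLM _ hlL))))
      (Submodule.smul_mem _ _ (Submodule.smul_mem _ _ (hLM _ hl'L))))
    (Submodule.smul_mem _ _ h1M)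

lemma chi_zero_right (hχ2 : ∀ g h k : G, χ g (h + k) = χ g h * χ g k) (g : G) :
    χ g 0 = 1 := by
  have := hχ2 g 0 0
  rw [add_zero] at this
  exact (left_eq_mul.mp this)

lemma chi_zero_left (hχ1 : ∀ g h k : G, χ (g + h) k = χ g k * χ h k) (h : G) :
    χ 0 h = 1 := by
  have := hχ1 0 0 h
  rw [add_zero] at this
  exact (left_eq_mul.mp this)

lemma chi_nsmul_right (hχ2 : ∀ g h k : G, χ g (h + k) = χ g h * χ g k) (g h : G) :
    ∀ n : ℕ, χ g (n • h) = (χ g h) ^ n := by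
  intro n
  induction n with
  | zero => rw [zero_smul, pow_zero]; exact chi_zero_right χ hχ2 g
  | succ n ih => rw [succ_nsmul, hχ2, ih, pow_succ]

lemma chi_nsmul_left (hχ1 : ∀ g h k : G, χ (g + h) k = χ g k * χ h k) (g h : G) :
    ∀ n : ℕ, χ (n • g) h = (χ g h) ^ n := by
  intro n
  induction n with
  | zero => rw [zero_smul, pow_zero]; exact chi_zero_left χ hχ1 h
  | succ n ih => rw [succ_nsmul, hχ1, ih, pow_succ]

lemma power_mem (hL : IsBracketClosed G 𝒜 χ L)
    (hχ1 : ∀ g h k : G, χ (g + h) k = χ g k * χ h k)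
    (hχ2 : ∀ g h k : G, χ g (h + k) = χ g h * χ g k)
    {u : A} {g : G} (hu : u ∈ L) (hg : u ∈ 𝒜 g)
    (hsq : ((χ g g : F)) ^ 2 = 1 → u * u = 0) :
    ∀ n : ℕ, u ^ (n + 1) ∈ L := by
  set p : F := (χ g g : F) with hp
  have hchi : ∀ a b : ℕ, ((χ (a • g) (b • g) : F)) = p ^ (a * b) := by
    intro a b
    rw [chi_nsmul_left χ hχ1, chi_nsmul_right χ hχ2, ← pow_mul]
    push_cast
    ring
  by_cases hroot : p ^ 2 = 1
  · intro n
    match n with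
    | 0 => simpa using hu
    | n + 1 =>
        have : u ^ (n + 2) = u ^ n * (u * u) := by rw [pow_add, pow_two]
        rw [this, hsq hroot, mul_zero]
        exact L.zero_mem
  · have hp1 : p ≠ 1 := fun h => hroot (by rw [h]; ring)
    have brak : ∀ a b : ℕ, u ^ (a + 1) ∈ L → u ^ (b + 1) ∈ L →
        p ^ ((a + 1) * (b + 1)) ≠ 1 → u ^ ((a + 1) + (b + 1)) ∈ L := by
      intro a b ha hb hne
      have h1 : u ^ (a + 1) ∈ 𝒜 ((a+1) • g) := SetLike.pow_mem_graded _ hg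
      have h2 : u ^ (b + 1) ∈ 𝒜 ((b+1) • g) := SetLike.pow_mem_graded _ hg
      have hbr := hL.2 ((a+1) • g) ((b+1) • g) (u ^ (a+1)) h1 (u ^ (b+1)) h2 ha hb
      have heq : u ^ (b+1) * u ^ (a+1)
            - ((χ ((b+1) • g) ((a+1) • g) : F)) • (u ^ (a+1) * u ^ (b+1))
          = (1 - p ^ ((a+1) * (b+1))) • u ^ ((a+1) + (b+1)) := by
        rw [hchi, ← pow_add, ← pow_add, sub_smul, one_smul, Nat.add_comm (b+1) (a+1)]
        ring_nf
      rw [heq] at hbr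
      have hne0 : (1 - p ^ ((a+1) * (b+1))) ≠ 0 := sub_ne_zero.mpr (Ne.symm hne)
      have := L.smul_mem (1 - p ^ ((a+1) * (b+1)))⁻¹ hbr
      rwa [smul_smul, inv_mul_cancel₀ hne0, one_smul] at this
    intro n
    induction n using Nat.strong_induction_on with
    | _ n IH =>
      match n with
      | 0 => simpa using hu
      | n + 1 =>
        by_cases hcase : p ^ (n + 1) ≠ 1
        · have := brak n 0 (IH n (by omega)) (by simpa using hu)
            (by simpa using hcase)
          simpa using this
        · push_neg at hcase
          have hn2 : 2 ≤ n := by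
            rcases Nat.lt_or_ge n 2 with h | h
            · interval_cases n
              · exact absurd (by simpa using hcase) hp1
              · exact absurd (by simpa using hcase) hroot
            · exact h
          have h2n : p ^ ((n - 1 + 1) * (1 + 1)) ≠ 1 := by
            intro hbad
            apply hroot
            have e1 : p ^ (2 * (n + 1)) = 1 := by
              rw [mul_comm, pow_mul, hcase, one_pow]
            have e2 : (n - 1 + 1) * (1 + 1) = 2 * n := by omega
            rw [e2] at hbad
            have : p ^ (2 * n) * p ^ 2 = 1 := by rw [← pow_add, ← e1]; ring_nf
            rwa [hbad, one_mul] at this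
          have := brak (n - 1) 1 (IH (n - 1) (by omega)) (IH 1 (by omega)) h2n
          have e3 : (n - 1 + 1) + (1 + 1) = n + 2 := by omega
          rwa [e3] at this

end Core

section Lists

variable (𝒜 : G → Submodule F A) (χ : G → G → Fˣ) (L : Submodule F A)

/-- product of the entries of a tagged word -/
def PP (l : List (G × A)) : A := (l.map Prod.snd).prod

/-- total degree of a tagged word -/
def SS (l : List (G × A)) : G := (l.map Prod.fst).sum

@[simp] lemma PP_nil : PP ([] : List (G × A)) = (1 : A) := rfl
@[simp] lemma PP_cons (a : G × A) (l : List (G × A)) : PP (a :: l) = a.2 * PP l := by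
  simp [PP]
@[simp] lemma PP_append (l1 l2 : List (G × A)) : PP (l1 ++ l2) = PP l1 * PP l2 := by
  simp [PP]
@[simp] lemma SS_nil : SS ([] : List (G × A)) = (0 : G) := rfl
@[simp] lemma SS_cons (a : G × A) (l : List (G × A)) : SS (a :: l) = a.1 + SS l := by
  simp [SS]
@[simp] lemma SS_append (l1 l2 : List (G × A)) : SS (l1 ++ l2) = SS l1 + SS l2 := by
  simp [SS]

/-- hypotheses on the letters -/
def GoodW (l : List (G × A)) : Prop :=
  (∀ p ∈ l, p.2 ∈ 𝒜 p.1 ∧ p.2 ∈ L ∧ (((χ p.1 p.1 : F)) ^ 2 = 1 → p.2 * p.2 = 0)) ∧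
  l.Pairwise (fun p q => p.2 ≠ q.2 → (χ p.1 q.1 : F) * (χ q.1 p.1 : F) ≠ 1)

variable {𝒜 χ L}

lemma Rsymm : Symmetric (fun p q : G × A =>
    p.2 ≠ q.2 → (χ p.1 q.1 : F) * (χ q.1 p.1 : F) ≠ 1) := by
  intro p q h hne heq
  exact h hne.symm (by rw [mul_comm] at heq; exact heq)

lemma good_perm {l l' : List (G × A)} (hg : GoodW 𝒜 χ L l) (hp : l.Perm l') :
    GoodW 𝒜 χ L l' :=
  ⟨fun p hp' => hg.1 p (hp.mem_iff.mpr hp'), (hp.pairwise_iff (fun h => Rsymm h)).mp hg.2⟩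

lemma good_append {l1 l2 : List (G × A)} (hg : GoodW 𝒜 χ L (l1 ++ l2)) :
    GoodW 𝒜 χ L l1 ∧ GoodW 𝒜 χ L l2 := by
  obtain ⟨hmem, hpw⟩ := hg
  rw [List.pairwise_append] at hpw
  exact ⟨⟨fun p hp => hmem p (by simp [hp]), hpw.1⟩,
    ⟨fun p hp => hmem p (by simp [hp]), hpw.2.1⟩⟩

lemma good_cons {a : G × A} {l : List (G × A)} (hg : GoodW 𝒜 χ L (a :: l)) :
    GoodW 𝒜 χ L l := (good_append (l1 := [a]) hg).2

lemma hom_PP [GradedAlgebra 𝒜] {l : List (G × A)} (hg : GoodW 𝒜 χ L l) :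
    PP l ∈ 𝒜 (SS l) :=
  SetLike.list_prod_map_mem_graded l Prod.fst Prod.snd (fun p hp => (hg.1 p hp).1)

end Lists

section Mfacts

variable {L : Submodule F A}

lemma one_mem_M : (1 : A) ∈ L ⊔ Submodule.span F {(1 : A)} :=
  Submodule.mem_sup_right (Submodule.mem_span_singleton_self 1)

lemma Mcomb {x y z : A} {c1 c2 : F}
    (h1 : x - c1 • y ∈ L ⊔ Submodule.span F {(1 : A)})
    (h2 : y - c2 • z ∈ L ⊔ Submodule.span F {(1 : A)}) :
    x - (c1 * c2) • z ∈ L ⊔ Submodule.span F {(1 : A)} := by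
  have key : x - (c1 * c2) • z = (x - c1 • y) + c1 • (y - c2 • z) := by module
  rw [key]
  exact Submodule.add_mem _ h1 (Submodule.smul_mem _ _ h2)

lemma Mtrans {x y : A} {c : F}
    (h1 : x - c • y ∈ L ⊔ Submodule.span F {(1 : A)})
    (h2 : y ∈ L ⊔ Submodule.span F {(1 : A)}) :
    x ∈ L ⊔ Submodule.span F {(1 : A)} := by
  have key : x = (x - c • y) + c • y := by module
  rw [key]
  exact Submodule.add_mem _ h1 (Submodule.smul_mem _ _ h2)

lemma Mself {x : A} {c : F}
    (h1 : x - c • x ∈ L ⊔ Submodule.span F {(1 : A)}) (hc : c ≠ 1) :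
    x ∈ L ⊔ Submodule.span F {(1 : A)} := by
  have h2 : (1 - c) • x ∈ L ⊔ Submodule.span F {(1 : A)} := by
    rwa [sub_smul, one_smul]
  have hne : (1 - c) ≠ 0 := sub_ne_zero.mpr (Ne.symm hc)
  have h3 := Submodule.smul_mem (L ⊔ Submodule.span F {(1 : A)}) (1 - c)⁻¹ h2
  rwa [smul_smul, inv_mul_cancel₀ hne, one_smul] at h3

end Mfacts

lemma exists_adj {α : Type*} (R : α → α → Prop) :
    ∀ l : List α, ¬ l.Chain' R → ∃ l1 a b l2, l = l1 ++ a :: b :: l2 ∧ ¬ R a b := by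
  intro l
  induction l with
  | nil => intro h; exact absurd List.isChain_nil h
  | cons x xs ih =>
    intro h
    rcases xs with _ | ⟨y, ys⟩
    · exact absurd (List.isChain_singleton x) h
    · by_cases hxy : R x y
      · have hys : ¬ (y :: ys).Chain' R := fun hc => h (List.isChain_cons_cons.mpr ⟨hxy, hc⟩)
        obtain ⟨l1, a, b, l2, heq, hnr⟩ := ih hys
        exact ⟨x :: l1, a, b, l2, by rw [heq]; rfl, hnr⟩
      · exact ⟨[], x, y, ys, rfl, hxy⟩

lemma chain_all_eq {α β : Type*} (f : α → β) :
    ∀ (a : α) (l : List α), List.Chain' (fun p q => f p = f q) (a :: l) →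
      ∀ x ∈ a :: l, f x = f a := by
  intro a l
  induction l generalizing a with
  | nil => intro _ x hx; simp at hx; rw [hx]
  | cons b t ih =>
    intro h x hx
    have h' := List.isChain_cons_cons.mp h
    rcases List.mem_cons.mp hx with rfl | hx'
    · rfl
    · exact (ih b h'.2 x hx').trans h'.1.symm

theorem main (𝒜 : G → Submodule F A) [GradedAlgebra 𝒜] (χ : G → G → Fˣ)
    (L : Submodule F A) (hL : IsBracketClosed G 𝒜 χ L)
    (hχ1 : ∀ g h k : G, χ (g + h) k = χ g k * χ h k)
    (hχ2 : ∀ g h k : G, χ g (h + k) = χ g h * χ g k) :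
    ∀ (n : ℕ) (ws : List (G × A)), ws.length = n → GoodW 𝒜 χ L ws →
      PP ws ∈ L ⊔ Submodule.span F {(1 : A)} := by
  intro n
  induction n using Nat.strong_induction_on with
  | _ n IH =>
  intro ws hlen hGood
  rcases ws with _ | ⟨a, ws1⟩
  · simpa using (one_mem_M (L := L))
  rcases ws1 with _ | ⟨b, tl⟩
  · simpa using Submodule.mem_sup_left (hGood.1 a (by simp)).2.1
  -- main case : ws = a :: b :: tl, with (a::b::tl).length = n
  have IH' : ∀ l : List (G × A), l.length < n → GoodW 𝒜 χ L l →
      PP l ∈ L ⊔ Submodule.span F {(1 : A)} :=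
    fun l hl hg => IH l.length hl l rfl hg
  set S : G := SS (a :: b :: tl) with hSdef
  -- one-step roll
  have roll1 : ∀ (c : G × A) (l : List (G × A)), (c :: l).length = n →
      GoodW 𝒜 χ L (c :: l) →
      PP (c :: l) - ((χ c.1 (SS l) : F)) • PP (l ++ [c])
        ∈ L ⊔ Submodule.span F {(1 : A)} := by
    intro c l hlen' hg
    have hc := hg.1 c List.mem_cons_self
    have hgl := good_cons hg
    have h1 : PP l ∈ 𝒜 (SS l) := hom_PP hgl
    have h2 := IH' l (by simp at hlen' ⊢; omega) hgl
    have h3 := swapM 𝒜 χ L hL hc.1 h1 (Submodule.mem_sup_left hc.2.1) h2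
    simpa using h3
  -- rolling a whole prefix, one element at a time
  have rotchain : ∀ (vs us : List (G × A)), GoodW 𝒜 χ L (vs ++ us) →
      (vs ++ us).length = n → SS (vs ++ us) = S →
      PP (vs ++ us)
        - ((vs.map (fun p => ((χ p.1 (S - p.1) : F)))).prod) • PP (us ++ vs)
        ∈ L ⊔ Submodule.span F {(1 : A)} := by
    intro vs
    induction vs with
    | nil =>
      intro us hg hlen' hSeq
      simp only [List.nil_append, List.append_nil, List.map_nil, List.prod_nil, one_smul,
        sub_self]
      exact zero_mem _
    | cons a' vs' ihv =>
      intro us hg hlen' hSeq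
      have hlen2 : (a' :: (vs' ++ us)).length = n := by simpa using hlen'
      have hg2 : GoodW 𝒜 χ L (a' :: (vs' ++ us)) := by
        simpa using hg
      have step1 := roll1 a' (vs' ++ us) hlen2 hg2
      have hSrest : SS (vs' ++ us) = S - a'.1 := by
        have h0 : a'.1 + SS (vs' ++ us) = S := by
          rw [← hSeq]; simp
        rw [← h0]; abel
      rw [hSrest] at step1
      have hperm : (a' :: (vs' ++ us)).Perm (vs' ++ (us ++ [a'])) := by
        have h1 : ([a'] ++ (vs' ++ us)).Perm ((vs' ++ us) ++ [a']) :=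
          List.perm_append_comm
        simpa [List.append_assoc] using h1
      have hg3 := good_perm hg2 hperm
      have hlen3 : (vs' ++ (us ++ [a'])).length = n := by
        rw [← hperm.length_eq]; exact hlen2
      have hS3 : SS (vs' ++ (us ++ [a'])) = S := by
        have hsum := (hperm.map Prod.fst).sum_eq
        have : SS (a' :: (vs' ++ us)) = SS (vs' ++ (us ++ [a'])) := hsum
        rw [← this, ← hSeq]; simp
      have step2 := ihv (us ++ [a']) hg3 hlen3 hS3
      rw [List.append_assoc] at step1
      have comb := Mcomb step1 step2
      have e2 : us ++ (a' :: vs') = (us ++ [a']) ++ vs' := by simp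
      have e3 : ((a' :: vs').map (fun p => ((χ p.1 (S - p.1) : F)))).prod
          = (χ a'.1 (S - a'.1) : F)
            * ((vs'.map (fun p => ((χ p.1 (S - p.1) : F)))).prod) := by
        simp
      show PP (a' :: (vs' ++ us))
          - (((a' :: vs').map (fun p => ((χ p.1 (S - p.1) : F)))).prod)
            • PP (us ++ (a' :: vs')) ∈ _
      rw [e2, e3]
      exact comb
  -- the case where the first two letters have distinct values
  have front : ∀ (a' b' : G × A) (tl' : List (G × A)),
      GoodW 𝒜 χ L (a' :: b' :: tl') → (a' :: b' :: tl').length = n →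
      SS (a' :: b' :: tl') = S →
      (χ a'.1 b'.1 : F) * (χ b'.1 a'.1 : F) ≠ 1 →
      PP (a' :: b' :: tl') ∈ L ⊔ Submodule.span F {(1 : A)} := by
    intro a' b' tl' hg hlen' hSeq ht
    have rel0 : PP (a' :: b' :: tl')
        - (((a' :: b' :: tl').map (fun p => ((χ p.1 (S - p.1) : F)))).prod)
          • PP (a' :: b' :: tl') ∈ L ⊔ Submodule.span F {(1 : A)} := by
      have h := rotchain (a' :: b' :: tl') [] (by simpa using hg)
        (by simpa using hlen') (by simpa using hSeq)
      simpa using h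
    have rel1 : PP (a' :: b' :: tl')
        - ((χ (a'.1 + b'.1) (SS tl') : F)
            * ((tl'.map (fun p => ((χ p.1 (S - p.1) : F)))).prod))
          • PP (a' :: b' :: tl') ∈ L ⊔ Submodule.span F {(1 : A)} := by
      rcases tl' with _ | ⟨c', tl''⟩
      · have hc1 : (χ (a'.1 + b'.1) (SS ([] : List (G × A))) : F)
            * (((List.map (fun p => ((χ p.1 (S - p.1) : F))) ([] : List (G × A)))).prod)
            = 1 := by
          simp [chi_zero_right χ hχ2]
        rw [hc1, one_smul, sub_self]
        exact zero_mem _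
      · have hgab : GoodW 𝒜 χ L [a', b'] :=
          (good_append (l1 := [a', b']) (l2 := c' :: tl'') hg).1
        have hgt : GoodW 𝒜 χ L (c' :: tl'') :=
          (good_append (l1 := [a', b']) (l2 := c' :: tl'') hg).2
        have hab : a'.2 * b'.2 ∈ 𝒜 (a'.1 + b'.1) :=
          SetLike.mul_mem_graded (hg.1 a' (by simp)).1 (hg.1 b' (by simp)).1
        have habM : a'.2 * b'.2 ∈ L ⊔ Submodule.span F {(1 : A)} := by
          have h := IH' [a', b'] (by simp at hlen' ⊢; omega) hgab
          simpa using h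
        have htl : PP (c' :: tl'') ∈ 𝒜 (SS (c' :: tl'')) := hom_PP hgt
        have htlM := IH' (c' :: tl'') (by simp at hlen' ⊢; omega) hgt
        have hsw := swapM 𝒜 χ L hL hab htl habM htlM
        have hperm2 : (a' :: b' :: (c' :: tl'')).Perm ((c' :: tl'') ++ [a', b']) := by
          have h1 : ([a', b'] ++ (c' :: tl'')).Perm ((c' :: tl'') ++ [a', b']) :=
            List.perm_append_comm
          simpa using h1
        have hg4 := good_perm hg hperm2
        have hlen4 : ((c' :: tl'') ++ [a', b']).length = n := by
          rw [← hperm2.length_eq]; exact hlen'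
        have hS4 : SS ((c' :: tl'') ++ [a', b']) = S := by
          have hsum := (hperm2.map Prod.fst).sum_eq
          have h5 : SS (a' :: b' :: (c' :: tl'')) = SS ((c' :: tl'') ++ [a', b']) := hsum
          rw [← h5]; exact hSeq
        have step2 := rotchain (c' :: tl'') [a', b'] hg4 hlen4 hS4
        have hsw' : PP (a' :: b' :: (c' :: tl''))
            - (χ (a'.1 + b'.1) (SS (c' :: tl'')) : F) • PP ((c' :: tl'') ++ [a', b'])
            ∈ L ⊔ Submodule.span F {(1 : A)} := by
          have e1 : PP (a' :: b' :: (c' :: tl'')) = (a'.2 * b'.2) * PP (c' :: tl'') := by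
            simp [mul_assoc]
          have e2 : PP ((c' :: tl'') ++ [a', b']) = PP (c' :: tl'') * (a'.2 * b'.2) := by
            simp [mul_assoc]
          rw [e1, e2]
          exact hsw
        have step2' : PP ((c' :: tl'') ++ [a', b'])
            - (((c' :: tl'').map (fun p => ((χ p.1 (S - p.1) : F)))).prod)
              • PP (a' :: b' :: (c' :: tl'')) ∈ L ⊔ Submodule.span F {(1 : A)} := by
          have e4 : [a', b'] ++ (c' :: tl'') = a' :: b' :: (c' :: tl'') := rfl
          rw [← e4]
          exact step2
        exact Mcomb hsw' step2'
    -- scalar identity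
    have hSsum : a'.1 + (b'.1 + SS tl') = S := by rw [← hSeq]; simp
    have key : (((a' :: b' :: tl').map (fun p => ((χ p.1 (S - p.1) : F)))).prod)
        = ((χ a'.1 b'.1 : F) * (χ b'.1 a'.1 : F))
          * ((χ (a'.1 + b'.1) (SS tl') : F)
            * ((tl'.map (fun p => ((χ p.1 (S - p.1) : F)))).prod)) := by
      have h1 : S - a'.1 = b'.1 + SS tl' := by rw [← hSsum]; abel
      have h2 : S - b'.1 = a'.1 + SS tl' := by rw [← hSsum]; abel
      have e1 : ((χ a'.1 (b'.1 + SS tl') : F))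
          = (χ a'.1 b'.1 : F) * (χ a'.1 (SS tl') : F) := by rw [hχ2]; push_cast; ring
      have e2 : ((χ b'.1 (a'.1 + SS tl') : F))
          = (χ b'.1 a'.1 : F) * (χ b'.1 (SS tl') : F) := by rw [hχ2]; push_cast; ring
      have e3 : ((χ (a'.1 + b'.1) (SS tl') : F))
          = (χ a'.1 (SS tl') : F) * (χ b'.1 (SS tl') : F) := by rw [hχ1]; push_cast; ring
      simp only [List.map_cons, List.prod_cons]
      rw [h1, h2, e1, e2, e3]
      ring
    by_cases hc0 : (((a' :: b' :: tl').map (fun p => ((χ p.1 (S - p.1) : F)))).prod) = 1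
    · have hc1 : (χ (a'.1 + b'.1) (SS tl') : F)
          * ((tl'.map (fun p => ((χ p.1 (S - p.1) : F)))).prod) ≠ 1 := by
        intro h
        rw [h, mul_one] at key
        exact ht (by rw [← key, hc0])
      exact Mself rel1 hc1
    · exact Mself rel0 hc0
  -- case split : all values equal, or two distinct adjacent values
  by_cases hch : List.Chain' (fun p q : G × A => p.2 = q.2) (a :: b :: tl)
  · -- all values equal : power case
    have hall := chain_all_eq Prod.snd a (b :: tl) hch
    by_cases ha0 : a.2 = 0
    · have hz : PP (a :: b :: tl) = 0 := by simp [ha0]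
      rw [hz]; exact zero_mem _
    · have hpow : PP (a :: b :: tl) = a.2 ^ (tl.length + 1 + 1) := by
        have h1 : ((a :: b :: tl).map Prod.snd).prod
            = a.2 ^ ((a :: b :: tl).map Prod.snd).length := by
          apply List.prod_eq_pow_card
          intro x hx
          simp only [List.mem_map] at hx
          obtain ⟨p, hp, rfl⟩ := hx
          exact hall p hp
        have h2 : ((a :: b :: tl).map Prod.snd).length = tl.length + 1 + 1 := by simp
        rw [h2] at h1
        exact h1
      have ha := hGood.1 a (by simp)
      have hp := power_mem 𝒜 χ L hL hχ1 hχ2 ha.2.1 ha.1 ha.2.2 (tl.length + 1)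
      rw [hpow]
      exact Submodule.mem_sup_left hp
  · -- two adjacent distinct values : rotate them to the front
    obtain ⟨pre, p, q, suf, heq, hpq⟩ :=
      exists_adj (fun p q : G × A => p.2 = q.2) (a :: b :: tl) hch
    have hgw : GoodW 𝒜 χ L (pre ++ p :: q :: suf) := heq ▸ hGood
    have hR : (χ p.1 q.1 : F) * (χ q.1 p.1 : F) ≠ 1 := by
      have hpw := hgw.2
      have h1 := (List.pairwise_append.mp hpw).2.1
      exact (List.pairwise_cons.mp h1).1 q (by simp) hpq
    have hlenw : (pre ++ p :: q :: suf).length = n := by rw [← heq]; exact hlen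
    have hSw : SS (pre ++ p :: q :: suf) = S := by rw [← heq]
    have hrot := rotchain pre (p :: q :: suf) hgw hlenw hSw
    have hperm : (pre ++ p :: q :: suf).Perm ((p :: q :: suf) ++ pre) :=
      List.perm_append_comm
    have hg2 := good_perm hgw hperm
    have hlen2 : ((p :: q :: suf) ++ pre).length = n := by
      rw [← hperm.length_eq]; exact hlenw
    have hS2 : SS ((p :: q :: suf) ++ pre) = S := by
      have hsum := (hperm.map Prod.fst).sum_eq
      have h5 : SS (pre ++ p :: q :: suf) = SS ((p :: q :: suf) ++ pre) := hsum
      rw [← h5]; exact hSw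
    have hfront : PP ((p :: q :: suf) ++ pre) ∈ L ⊔ Submodule.span F {(1 : A)} := by
      have e : (p :: q :: suf) ++ pre = p :: q :: (suf ++ pre) := rfl
      rw [e] at hg2 hlen2 hS2 ⊢
      exact front p q (suf ++ pre) hg2 hlen2 hS2 hR
    rw [heq]
    exact Mtrans hrot hfront



end Stmt9


theorem stmt_9 (F : Type*) [Field F] [CharZero F]
    (G : Type*) [AddCommGroup G] [DecidableEq G]
    (A : Type*) [Ring A] [Algebra F A]
    (𝒜 : G → Submodule F A) [GradedAlgebra 𝒜]
    (χ : G → G → Fˣ)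
    (hχ1 : ∀ g h k : G, χ (g + h) k = χ g k * χ h k)
    (hχ2 : ∀ g h k : G, χ g (h + k) = χ g h * χ g k)
    (L : Submodule F A) (hL : IsBracketClosed G 𝒜 χ L)
    (m : ℕ) (hm : 0 < m)
    (d : Fin m → G) (w : Fin m → A)
    (hhom : ∀ i, w i ∈ 𝒜 (d i)) (hwL : ∀ i, w i ∈ L)
    (hsq : ∀ i, ((χ (d i) (d i) : F)) ^ 2 = 1 → w i * w i = 0)
    (hne : ∀ i j, i ≠ j → w i ≠ w j →
      (χ (d i) (d j) : F) * (χ (d j) (d i) : F) ≠ 1) :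
    (List.ofFn w).prod ∈ L ⊔ Submodule.span F {(1 : A)} := by
  set ws : List (G × A) := List.ofFn (fun i => (d i, w i)) with hws
  have hPP : Stmt9.PP ws = (List.ofFn w).prod := by
    rw [hws, Stmt9.PP, List.map_ofFn]
    rfl
  have hgood : Stmt9.GoodW 𝒜 χ L ws := by
    constructor
    · intro p hp
      rw [hws, List.mem_ofFn] at hp
      obtain ⟨i, rfl⟩ := hp
      exact ⟨hhom i, hwL i, hsq i⟩
    · rw [hws, List.pairwise_ofFn]
      intro i j hij hnev
      exact hne i j (Fin.ne_of_lt hij) hnev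
  rw [← hPP]
  exact Stmt9.main 𝒜 χ L hL hχ1 hχ2 ws.length ws rfl hgood
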